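/- Let ℓ : ℝ → ℝ be convex and continuously differentiable. Fix x ∈ ℝ, and for γ > 0 let p_γ = prox_ℓ(x, 1/γ). Then for any γ̃, γ > 0: (γ̃ - γ)(p_γ̃ - p_γ)(p_γ - x) + γ̃ (p_γ̃ - p_γ)² ≤ 0. -/

import Mathlib

lemma prox_deriv (ℓ : ℝ → ℝ) (hdiff : Differentiable ℝ ℓ) (x γ p : ℝ)
    (hp : ∀ u : ℝ, γ / 2 * (x - p)^2 + ℓ p ≤ γ / 2 * (x - u)^2 + ℓ u) :
    deriv ℓ p = γ * (x - p) := by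
  set f : ℝ → ℝ := fun u => γ / 2 * (x - u)^2 + ℓ u with hf
  have hfd : ∀ u, HasDerivAt f (γ / 2 * (2 * (x - u) * (-1)) + deriv ℓ u) u := by
    intro u
    have := (((hasDerivAt_id u).const_sub x).pow 2).const_mul (γ/2) |>.add
      (hdiff u).hasDerivAt
    exact this.congr_deriv (by simp [id])
  have hmin : IsLocalMin f p := by
    apply IsMinOn.isLocalMin (s := Set.univ)
    · intro u _; exact hp u
    · exact Filter.univ_mem
  have h0 := hmin.deriv_eq_zero
  rw [(hfd p).deriv] at h0
  linarith
/-- For ℓ convex and C¹, with p, pt the proximal points of x at parameters 1/γ, 1/γt,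
we have (γ̃-γ)(p̃-p)(p-x) + γ̃(p̃-p)² ≤ 0. -/
theorem stmt7 (ℓ : ℝ → ℝ) (hconv : ConvexOn ℝ Set.univ ℓ)
    (hdiff : Differentiable ℝ ℓ) (hcont : Continuous (deriv ℓ))
    (x γ γt p pt : ℝ) (hγ : 0 < γ) (hγt : 0 < γt)
    (hp : ∀ u : ℝ, γ / 2 * (x - p)^2 + ℓ p ≤ γ / 2 * (x - u)^2 + ℓ u)
    (hpt : ∀ u : ℝ, γt / 2 * (x - pt)^2 + ℓ pt ≤ γt / 2 * (x - u)^2 + ℓ u) :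
    (γt - γ) * (pt - p) * (p - x) + γt * (pt - p)^2 ≤ 0 := by
  have h1 := prox_deriv ℓ hdiff x γ p hp
  have h2 := prox_deriv ℓ hdiff x γt pt hpt
  have hmono := hconv.monotoneOn_deriv (fun u _ => hdiff u)
  have key : 0 ≤ (deriv ℓ pt - deriv ℓ p) * (pt - p) := by
    rcases le_total p pt with h | h
    · have := hmono (Set.mem_univ p) (Set.mem_univ pt) h
      nlinarith
    · have := hmono (Set.mem_univ pt) (Set.mem_univ p) h
      nlinarith
  rw [h1, h2] at key
  nlinarith
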